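/- arXiv:1209.5775 — 2 statements merged into one kernel-verified Lean document; each statement's English description precedes it below -/
import Mathlib

section
/- Let g ∈ C²((a,b)) ∩ C¹([a,b)) satisfy g''(x) + a₁(x)g'(x) + a₀(x)g(x) ≤ 0 on (a,b), where |a₁|, |a₀| ≤ C. Then there exists δ = δ(C) > 0 such that on any subinterval [c,d] ⊆ [a,b) with d - c < δ, if g(c) ≥ 0 and g(d) ≥ 0 then g ≥ 0 on [c,d]. -/
open Set Topology Filter

lemma second_deriv_nonneg_of_isLocalMin {f : ℝ → ℝ} {x₀ : ℝ} {s : Set ℝ}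
    (hs : IsOpen s) (hx : x₀ ∈ s) (hf : ContDiffOn ℝ 2 f s)
    (hmin : IsLocalMin f x₀) : 0 ≤ deriv (deriv f) x₀ := by
  have hdiff : ∀ x ∈ s, DifferentiableAt ℝ f x := fun x hxs =>
    (hf.differentiableOn (by norm_num)).differentiableAt (hs.mem_nhds hxs)
  have hd' : ContDiffOn ℝ 1 (deriv f) s := by
    exact ((contDiffOn_succ_iff_deriv_of_isOpen hs).mp (hf.of_le (by norm_num))).2.2
  have hd2 : DifferentiableAt ℝ (deriv f) x₀ :=
    (hd'.differentiableOn one_ne_zero).differentiableAt (hs.mem_nhds hx)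
  by_contra hneg
  push_neg at hneg
  have h0 : deriv f x₀ = 0 := hmin.deriv_eq_zero
  have hslope := hd2.hasDerivAt
  rw [hasDerivAt_iff_tendsto_slope] at hslope
  have hev : ∀ᶠ x in 𝓝[≠] x₀, slope (deriv f) x₀ x < 0 :=
    hslope.eventually (gt_mem_nhds hneg)
  have hev' : ∀ᶠ x in 𝓝[>] x₀, slope (deriv f) x₀ x < 0 :=
    hev.filter_mono (nhdsWithin_mono _ (fun y hy => ne_of_gt hy))
  have hmem : ∀ᶠ x in 𝓝[>] x₀, x ∈ Ioi x₀ := eventually_mem_nhdsWithin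
  have hev2 : ∀ᶠ x in 𝓝[>] x₀, deriv f x < 0 := by
    filter_upwards [hev', hmem] with x hx1 hx2
    rw [slope_def_field, h0, sub_zero] at hx1
    by_contra hge
    push_neg at hge
    have : (0:ℝ) ≤ deriv f x / (x - x₀) := div_nonneg hge (by simp at hx2; linarith)
    linarith
  have hrest : ∀ᶠ x in 𝓝[>] x₀, x ∈ s ∧ f x₀ ≤ f x :=
    ((eventually_mem_nhds_iff.mpr (hs.mem_nhds hx) |>.mono fun y hy => mem_of_mem_nhds hy).and hmin).filter_mono nhdsWithin_le_nhds
  have hall := hev2.and hrest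
  rw [Filter.Eventually, mem_nhdsGT_iff_exists_Ioc_subset] at hall
  obtain ⟨u, hu, hsub2⟩ := hall
  simp only [mem_Ioi] at hu
  have hcont : ContinuousOn f (Icc x₀ u) := by
    intro x hxI
    have hxs : x ∈ s := by
      rcases eq_or_lt_of_le hxI.1 with h | h
      · exact h ▸ hx
      · exact (hsub2 ⟨h, hxI.2⟩).2.1
    exact ((hdiff x hxs).continuousAt).continuousWithinAt
  have hanti : StrictAntiOn f (Icc x₀ u) := by
    apply strictAntiOn_of_deriv_neg (convex_Icc _ _) hcont
    intro x hxI
    rw [interior_Icc] at hxI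
    exact (hsub2 ⟨hxI.1, le_of_lt hxI.2⟩).1
  have h1 : f u < f x₀ := hanti ⟨le_refl _, le_of_lt hu⟩ ⟨le_of_lt hu, le_refl _⟩ hu
  have h2 : f x₀ ≤ f u := (hsub2 ⟨hu, le_refl _⟩).2.2
  linarith

set_option maxHeartbeats 1000000 in
/-- Maximum principle on small intervals for second order differential
inequalities with bounded coefficients: δ depends only on the bound C. -/
theorem stmt_1 (C : ℝ) (hC : 0 < C) :
    ∃ δ > (0 : ℝ), ∀ (a b : ℝ), a < b →
      ∀ (a1 a0 g : ℝ → ℝ),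
        ContDiffOn ℝ 2 g (Set.Ioo a b) →
        ContDiffOn ℝ 1 g (Set.Ico a b) →
        (∀ x ∈ Set.Ico a b, |a1 x| ≤ C) →
        (∀ x ∈ Set.Ico a b, |a0 x| ≤ C) →
        (∀ x ∈ Set.Ioo a b,
          iteratedDeriv 2 g x + a1 x * deriv g x + a0 x * g x ≤ 0) →
        ∀ c d : ℝ, Set.Icc c d ⊆ Set.Ico a b → d - c < δ →
          0 ≤ g c → 0 ≤ g d → ∀ x ∈ Set.Icc c d, 0 ≤ g x := by
  refine ⟨min (1/(4*C)) (1/4), lt_min (by positivity) (by norm_num), ?_⟩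
  intro a b hab a1 a0 g hg2 hg1 ha1 ha0 hineq c d hsub hdc gc gd
  by_contra hcon
  push_neg at hcon
  obtain ⟨z, hz, hgz⟩ := hcon
  have hcd : c ≤ d := hz.1.trans hz.2
  have hd1 : d - c < 1/(4*C) := lt_of_lt_of_le hdc (min_le_left _ _)
  have hd2 : d - c < 1/4 := lt_of_lt_of_le hdc (min_le_right _ _)
  set w : ℝ → ℝ := fun x => 1 - C * (x - c)^2 with hw_def
  have hwbound : ∀ x ∈ Icc c d, 15/16 ≤ w x ∧ w x ≤ 1 := by
    intro x hx
    have h1 : 0 ≤ x - c := by linarith [hx.1]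
    have h2 : x - c ≤ d - c := by linarith [hx.2]
    have e1 : C * (x - c) ≤ 1/4 := by
      have e0 := mul_le_mul_of_nonneg_left (le_trans h2 (le_of_lt hd1)) (le_of_lt hC)
      have e2 : C * (1/(4*C)) = 1/4 := by field_simp
      linarith
    have e3 : x - c ≤ 1/4 := by linarith
    constructor
    · simp only [hw_def]
      nlinarith [mul_le_mul e1 e3 h1 (by norm_num : (0:ℝ) ≤ 1/4)]
    · simp only [hw_def]
      nlinarith [sq_nonneg (x - c), hC]
  have hwpos : ∀ x ∈ Icc c d, (0:ℝ) < w x := fun x hx => lt_of_lt_of_le (by norm_num) (hwbound x hx).1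
  -- min of g/w on [c,d]
  have hgc : ContinuousOn g (Icc c d) := (hg1.continuousOn).mono hsub
  have hwc : ContinuousOn w (Icc c d) := by fun_prop
  have hvc : ContinuousOn (fun x => g x / w x) (Icc c d) :=
    hgc.div hwc (fun x hx => ne_of_gt (hwpos x hx))
  obtain ⟨x₀, hx₀, hmin⟩ := isCompact_Icc.exists_isMinOn ⟨z, hz⟩ hvc
  set lam := g x₀ / w x₀ with hlam_def
  have hminall : ∀ x ∈ Icc c d, lam ≤ g x / w x := fun x hx => hmin hx
  have hlam_neg : lam < 0 :=
    lt_of_le_of_lt (hminall z hz) (div_neg_of_neg_of_pos hgz (hwpos z hz))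
  -- x₀ interior
  have hcmem : c ∈ Icc c d := ⟨le_refl _, hcd⟩
  have hdmem : d ∈ Icc c d := ⟨hcd, le_refl _⟩
  have hx₀c : c < x₀ := by
    rcases eq_or_lt_of_le hx₀.1 with h | h
    · exfalso
      have : (0:ℝ) ≤ g x₀ / w x₀ := by
        rw [← h]; exact div_nonneg gc (le_of_lt (hwpos c hcmem))
      exact absurd (this.trans_lt hlam_neg) (lt_irrefl _)
    · exact h
  have hx₀d : x₀ < d := by
    rcases eq_or_lt_of_le hx₀.2 with h | h
    · exfalso
      have : (0:ℝ) ≤ g x₀ / w x₀ := by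
        rw [h]; exact div_nonneg gd (le_of_lt (hwpos d hdmem))
      exact absurd (this.trans_lt hlam_neg) (lt_irrefl _)
    · exact h
  have hx₀ab : x₀ ∈ Ioo a b := by
    have h1 := hsub hcmem
    have h2 := hsub hx₀
    exact ⟨lt_of_le_of_lt h1.1 hx₀c, h2.2⟩
  -- the auxiliary function h
  set h : ℝ → ℝ := fun x => g x - lam * w x with hh_def
  have hwx₀ : w x₀ ≠ 0 := ne_of_gt (hwpos x₀ hx₀)
  have hh0 : h x₀ = 0 := by
    simp only [hh_def, hlam_def]
    field_simp
    ring
  have hhnn : ∀ x ∈ Icc c d, 0 ≤ h x := by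
    intro x hx
    have hwp := hwpos x hx
    have := (le_div_iff₀ hwp).mp (hminall x hx)
    simp only [hh_def]
    linarith
  have hloc : IsLocalMin h x₀ := by
    have : Ioo c d ∈ 𝓝 x₀ := isOpen_Ioo.mem_nhds ⟨hx₀c, hx₀d⟩
    filter_upwards [this] with x hx
    rw [hh0]
    exact hhnn x ⟨le_of_lt hx.1, le_of_lt hx.2⟩
  -- smoothness of h on Ioo a b
  have hwsm : ContDiff ℝ 2 (fun x => lam * w x) := by
    simp only [hw_def]
    fun_prop
  have hh2 : ContDiffOn ℝ 2 h (Ioo a b) := hg2.sub (hwsm.contDiffOn)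
  -- second derivative test
  have hsecond : 0 ≤ deriv (deriv h) x₀ :=
    second_deriv_nonneg_of_isLocalMin isOpen_Ioo hx₀ab hh2 hloc
  -- derivative of w
  have hwderiv : ∀ x : ℝ, HasDerivAt w (-(2*C*(x - c))) x := by
    intro x
    have h1 : HasDerivAt (fun y : ℝ => (y - c)^2) (2*(x-c)) x := by
      have := ((hasDerivAt_id x).sub_const c).fun_pow 2
      simpa using this
    have h2 : HasDerivAt (fun y : ℝ => C * (y - c)^2) (C * (2*(x-c))) x := h1.const_mul C
    have h3 := h2.const_sub 1
    exact h3.congr_deriv (by ring)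
  -- deriv h near x₀
  have hgdiff : ∀ x ∈ Ioo a b, DifferentiableAt ℝ g x := fun x hx =>
    (hg2.differentiableOn (by norm_num)).differentiableAt (isOpen_Ioo.mem_nhds hx)
  have hderiv_h : ∀ x ∈ Ioo a b, deriv h x = deriv g x + lam * (2*C*(x - c)) := by
    intro x hx
    have hd1 : HasDerivAt (fun y => lam * w y) (lam * (-(2*C*(x-c)))) x :=
      (hwderiv x).const_mul lam
    rw [hh_def]
    rw [deriv_fun_sub (hgdiff x hx) hd1.differentiableAt, hd1.deriv]
    ring
  clear_value w h
  -- deriv g is differentiable at x₀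
  have hdg1 : ContDiffOn ℝ 1 (deriv g) (Ioo a b) :=
    ((contDiffOn_succ_iff_deriv_of_isOpen isOpen_Ioo).mp (hg2.of_le (by norm_num))).2.2
  have hdg2 : DifferentiableAt ℝ (deriv g) x₀ :=
    (hdg1.differentiableOn one_ne_zero).differentiableAt (isOpen_Ioo.mem_nhds hx₀ab)
  -- second derivative relation
  have heq : deriv (deriv h) x₀ = deriv (deriv g) x₀ + lam * (2*C) := by
    have hevq : deriv h =ᶠ[𝓝 x₀] (fun x => deriv g x + lam * (2*C*(x - c))) := by
      filter_upwards [isOpen_Ioo.mem_nhds hx₀ab] with x hx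
      exact hderiv_h x hx
    rw [hevq.deriv_eq]
    have hlin : HasDerivAt (fun x : ℝ => lam * (2*C*(x - c))) (lam * (2*C)) x₀ := by
      have : HasDerivAt (fun x : ℝ => x - c) 1 x₀ := (hasDerivAt_id x₀).sub_const c
      have := (this.const_mul (2*C)).const_mul lam
      exact this.congr_deriv (by ring)
    rw [deriv_fun_add hdg2 hlin.differentiableAt, hlin.deriv]
  -- first derivative at x₀
  have hfirst : deriv h x₀ = 0 := hloc.deriv_eq_zero
  have hgderiv : deriv g x₀ = -lam * (2*C*(x₀ - c)) := by
    have := hderiv_h x₀ hx₀ab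
    rw [hfirst] at this
    linarith
  have hgval : g x₀ = lam * w x₀ := by
    rw [hlam_def]; field_simp
  -- iterated deriv
  have hiter : iteratedDeriv 2 g x₀ = deriv (deriv g) x₀ := by
    rw [show (2:ℕ) = 1+1 from rfl, iteratedDeriv_succ, iteratedDeriv_one]
  -- final contradiction
  have hLg := hineq x₀ hx₀ab
  rw [hiter, hgderiv, hgval] at hLg
  have hg'' : deriv (deriv g) x₀ = deriv (deriv h) x₀ - lam * (2*C) := by linarith [heq]
  rw [hg''] at hLg
  -- bounds
  have hx₀ICO : x₀ ∈ Ico a b := hsub hx₀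
  have hb1 : |a1 x₀| ≤ C := ha1 x₀ hx₀ICO
  have hb0 : |a0 x₀| ≤ C := ha0 x₀ hx₀ICO
  have hxc1 : 0 ≤ x₀ - c := by linarith
  have hxc2 : x₀ - c ≤ d - c := by linarith
  have hwb := hwbound x₀ hx₀
  -- T = -2C + a1 * (-(2C(x₀-c))) + a0 * w x₀ ≤ -C/2
  have habs1 : a1 x₀ * (-(2*C*(x₀ - c))) ≤ C/2 := by
    have h1 : |a1 x₀ * (-(2*C*(x₀ - c)))| ≤ C * (2*C*(x₀-c)) := by
      rw [abs_mul, abs_neg]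
      have h2 : |2*C*(x₀-c)| = 2*C*(x₀-c) := abs_of_nonneg (by positivity)
      rw [h2]
      exact mul_le_mul_of_nonneg_right hb1 (by positivity)
    have h3 : 2*C*(x₀-c) ≤ 2*C*(1/(4*C)) :=
      mul_le_mul_of_nonneg_left (by linarith) (by positivity)
    have h4 : 2*C*(1/(4*C)) = 1/2 := by field_simp; ring
    nlinarith [le_abs_self (a1 x₀ * (-(2*C*(x₀ - c))))]
  have habs0 : a0 x₀ * w x₀ ≤ C := by
    have h1 : a0 x₀ * w x₀ ≤ |a0 x₀ * w x₀| := le_abs_self _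
    have h2 : |a0 x₀ * w x₀| = |a0 x₀| * |w x₀| := abs_mul _ _
    have h3 : |w x₀| ≤ 1 := by
      rw [abs_of_pos (hwpos x₀ hx₀)]; exact hwb.2
    nlinarith [abs_nonneg (a0 x₀)]
  have hT : -(2*C) + a1 x₀ * (-(2*C*(x₀ - c))) + a0 x₀ * w x₀ ≤ -C/2 := by linarith
  have key : 0 < lam * (-(2*C) + a1 x₀ * (-(2*C*(x₀ - c))) + a0 x₀ * w x₀) := by
    have hp := mul_pos (neg_pos.mpr hlam_neg)
      (by linarith : (0:ℝ) < -(-(2*C) + a1 x₀ * (-(2*C*(x₀ - c))) + a0 x₀ * w x₀))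
    nlinarith [hp]
  linarith [hLg, hsecond, key]
end

section
/- Fix n ≥ 3 and α with 0 < α < 1. Define β = nα/(1-α), λₙ = [(β+n)(β+n-1)⋯(β+1)]^{1/(α-1)}, and u(x) = (−1)^{n-1}λₙ(−x)^{n/(1-α)} for x < 0 and u(x) = −λₙ x^{n/(1-α)} for x ≥ 0. Then u is n times differentiable on ℝ and u⁽ⁿ⁾(x) = −|u(x)|^α for all x ∈ ℝ. -/
open Set

private lemma aux_hasDerivAt (c d q : ℝ) (hq : 1 < q) (x : ℝ) :
    HasDerivAt (fun y : ℝ => if y < 0 then c * (-y) ^ q else d * y ^ q)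
      (if x < 0 then (-(c * q)) * (-x) ^ (q - 1) else (d * q) * x ^ (q - 1)) x := by
  have hq0 : q ≠ 0 := by linarith
  have hq1 : q - 1 ≠ 0 := by intro h; apply hq.ne'; linarith
  rcases lt_trichotomy x 0 with hx | hx | hx
  · have hne : (-x) ≠ 0 := by simp [hx.ne]
    have h1 : HasDerivAt (fun t : ℝ => t ^ q) (q * (-x) ^ (q - 1)) (-x) :=
      Real.hasDerivAt_rpow_const (Or.inl hne)
    have h2 : HasDerivAt (fun y : ℝ => (-y) ^ q) (q * (-x) ^ (q - 1) * (-1)) x :=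
      h1.comp x (hasDerivAt_neg x)
    have h3 := h2.const_mul c
    have h4 : HasDerivAt (fun y : ℝ => if y < 0 then c * (-y) ^ q else d * y ^ q)
        (c * (q * (-x) ^ (q - 1) * (-1))) x := by
      apply h3.congr_of_eventuallyEq
      filter_upwards [Iio_mem_nhds hx] with y hy
      rw [Set.mem_Iio] at hy
      rw [if_pos hy]
    convert h4 using 1
    simp only [if_pos hx]; ring
  · subst hx
    have hval : (if (0:ℝ) < 0 then (-(c * q)) * (-(0:ℝ)) ^ (q - 1)
        else (d * q) * (0:ℝ) ^ (q - 1)) = 0 := by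
      simp [Real.zero_rpow hq1]
    rw [hval]
    rw [hasDerivAt_iff_tendsto_slope]
    have hbound : ∀ᶠ y in nhdsWithin (0:ℝ) {(0:ℝ)}ᶜ,
        ‖slope (fun y : ℝ => if y < 0 then c * (-y) ^ q else d * y ^ q) 0 y‖
          ≤ (|c| + |d|) * |y| ^ (q - 1) := by
      filter_upwards [self_mem_nhdsWithin] with y hy
      have hy0 : y ≠ 0 := hy
      have habs : |(if y < 0 then c * (-y) ^ q else d * y ^ q)| ≤ (|c| + |d|) * |y| ^ q := by
        by_cases h : y < 0
        · rw [if_pos h]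
          rw [abs_mul, abs_of_nonneg (Real.rpow_nonneg (by linarith : (0:ℝ) ≤ -y) q)]
          rw [abs_of_neg h]
          have : 0 ≤ |d| * (-y) ^ q :=
            mul_nonneg (abs_nonneg d) (Real.rpow_nonneg (by linarith) q)
          nlinarith [Real.rpow_nonneg (by linarith : (0:ℝ) ≤ -y) q]
        · rw [if_neg h]
          push_neg at h
          rw [abs_mul, abs_of_nonneg (Real.rpow_nonneg h q), abs_of_nonneg h]
          have : 0 ≤ |c| * y ^ q := mul_nonneg (abs_nonneg c) (Real.rpow_nonneg h q)
          nlinarith [Real.rpow_nonneg h q]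
      have hslope : slope (fun y : ℝ => if y < 0 then c * (-y) ^ q else d * y ^ q) 0 y
          = (if y < 0 then c * (-y) ^ q else d * y ^ q) / y := by
        rw [slope_def_field]
        simp [Real.zero_rpow hq0]
      rw [hslope]
      rw [norm_div, Real.norm_eq_abs, Real.norm_eq_abs]
      rw [div_le_iff₀ (abs_pos.mpr hy0)]
      calc |(if y < 0 then c * (-y) ^ q else d * y ^ q)| ≤ (|c| + |d|) * |y| ^ q := habs
        _ = (|c| + |d|) * |y| ^ (q - 1) * |y| := by
            rw [mul_assoc, ← Real.rpow_add_one (abs_ne_zero.mpr hy0)]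
            ring_nf
    apply squeeze_zero_norm' hbound
    have hcont : ContinuousAt (fun y : ℝ => (|c| + |d|) * |y| ^ (q - 1)) 0 := by
      have h0 : ContinuousAt (fun y : ℝ => |y| ^ (q - 1)) 0 := by
        have := (Real.continuousAt_rpow_const (|(0:ℝ)|) (q - 1)
          (Or.inr (by linarith))).comp (continuous_abs.continuousAt (x := (0:ℝ)))
        exact this
      exact h0.const_mul _
    have := hcont.tendsto
    simp only [abs_zero, Real.zero_rpow hq1, mul_zero] at this
    exact this.mono_left nhdsWithin_le_nhds
  · have hne : x ≠ 0 := hx.ne'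
    have h1 : HasDerivAt (fun t : ℝ => t ^ q) (q * x ^ (q - 1)) x :=
      Real.hasDerivAt_rpow_const (Or.inl hne)
    have h3 := h1.const_mul d
    have h4 : HasDerivAt (fun y : ℝ => if y < 0 then c * (-y) ^ q else d * y ^ q)
        (d * (q * x ^ (q - 1))) x := by
      apply h3.congr_of_eventuallyEq
      filter_upwards [Ioi_mem_nhds hx] with y hy
      simp [not_lt.mpr (le_of_lt (Set.mem_Ioi.mp hy))]
    convert h4 using 1
    rw [if_neg (not_lt.mpr hx.le)]; ring

/-- The explicit sharpness example: u⁽ⁿ⁾ = -|u|^α. -/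
theorem stmt_13 (n : ℕ) (hn : 3 ≤ n) (α : ℝ) (hα0 : 0 < α) (hα1 : α < 1)
    (β lam : ℝ) (hβ : β = n * α / (1 - α))
    (hlam : lam = (∏ j ∈ Finset.Icc 1 n, (β + j)) ^ ((1 : ℝ) / (α - 1)))
    (u : ℝ → ℝ)
    (hu : u = fun x => if x < 0 then
        (-1 : ℝ) ^ (n - 1) * lam * (-x) ^ ((n : ℝ) / (1 - α))
      else
        -(lam * x ^ ((n : ℝ) / (1 - α)))) :
    (∀ k < n, Differentiable ℝ (iteratedDeriv k u)) ∧
    ∀ x : ℝ, iteratedDeriv n u x = -|u x| ^ α := by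
  have h1α : (0:ℝ) < 1 - α := by linarith
  have hnpos : (0:ℝ) < n := by positivity
  have hβpos : 0 < β := by rw [hβ]; positivity
  have hpn : (n : ℝ) / (1 - α) = β + n := by
    rw [hβ]; field_simp; ring
  -- the key formula for iterated derivatives
  have key : ∀ k, k ≤ n → iteratedDeriv k u = fun x =>
      if x < 0 then
        ((-1 : ℝ) ^ (n - 1 + k) * lam * ∏ j ∈ Finset.range k, (β + n - j)) * (-x) ^ (β + n - k)
      else
        (-(lam * ∏ j ∈ Finset.range k, (β + n - j))) * x ^ (β + n - k) := by
    intro k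
    induction k with
    | zero =>
      intro _
      rw [iteratedDeriv_zero, hu]
      funext x
      simp only [Finset.range_zero, Finset.prod_empty, Nat.cast_zero, sub_zero, add_zero,
        mul_one, pow_zero, hpn]
      by_cases hx : x < 0 <;> simp [hx]
    | succ k ih =>
      intro hk1
      have hk : k ≤ n := le_of_lt hk1
      have hkn : k < n := hk1
      have hq : 1 < β + n - k := by
        have : (k : ℝ) ≤ (n : ℝ) - 1 := by
          have : (k:ℝ) + 1 ≤ n := by exact_mod_cast hk1
          linarith
        linarith
      rw [iteratedDeriv_succ, ih hk]
      funext x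
      rw [(aux_hasDerivAt _ _ _ hq x).deriv]
      have hexp : β + (n:ℝ) - k - 1 = β + n - (k + 1 : ℕ) := by push_cast; ring
      rw [hexp]
      by_cases hx : x < 0
      · rw [if_pos hx, if_pos hx, Finset.prod_range_succ,
          show n - 1 + (k + 1) = (n - 1 + k) + 1 from by omega, pow_succ]
        ring
      · rw [if_neg hx, if_neg hx, Finset.prod_range_succ]
        ring
  have hP : 0 < ∏ j ∈ Finset.Icc 1 n, (β + (j:ℝ)) := by
    apply Finset.prod_pos
    intro j _
    positivity
  have hA : ∏ j ∈ Finset.range n, (β + (n:ℝ) - j) = ∏ j ∈ Finset.Icc 1 n, (β + (j:ℝ)) := by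
    have h1 : (Finset.Icc 1 n) = Finset.Ico 1 (n + 1) := by
      rw [Finset.Ico_add_one_right_eq_Icc]
    rw [h1, Finset.prod_Ico_eq_prod_range]
    simp only [Nat.add_sub_cancel]
    rw [← Finset.prod_range_reflect]
    apply Finset.prod_congr rfl
    intro j hj
    rw [Finset.mem_range] at hj
    have h2 : ((n - 1 - j : ℕ) : ℝ) = (n : ℝ) - 1 - j := by
      have : j ≤ n - 1 := by omega
      push_cast [Nat.sub_sub, Nat.cast_sub (by omega : 1 + j ≤ n)]
      ring
    rw [h2]
    push_cast
    ring
  have hlampos : 0 < lam := by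
    rw [hlam]
    exact Real.rpow_pos_of_pos hP _
  constructor
  · intro k hk
    rw [key k (le_of_lt hk)]
    intro x
    have hq : 1 < β + n - k := by
      have : (k : ℝ) ≤ (n : ℝ) - 1 := by
        have : (k:ℝ) + 1 ≤ n := by exact_mod_cast hk
        linarith
      linarith
    exact (aux_hasDerivAt _ _ _ hq x).differentiableAt
  · intro x
    rw [key n le_rfl]
    have hodd : Odd (n - 1 + n) := ⟨n - 1, by omega⟩
    have hexpn : β + (n:ℝ) - n = β := by ring
    have hpα : (β + (n:ℝ)) * α = β := by
      have hb : β * (1 - α) = n * α := by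
        rw [hβ, div_mul_cancel₀ _ (ne_of_gt h1α)]
      linear_combination (-1 : ℝ) * hb
    have hlamA : lam * ∏ j ∈ Finset.Icc 1 n, (β + (j:ℝ)) = lam ^ α := by
      have hα1' : α - 1 ≠ 0 := by intro h; apply hα1.ne; linarith
      have h1 : ((∏ j ∈ Finset.Icc 1 n, (β + (j:ℝ))) ^ ((1:ℝ) / (α - 1))) ^ α
          = (∏ j ∈ Finset.Icc 1 n, (β + (j:ℝ))) ^ ((1:ℝ) / (α - 1) * α) :=
        (Real.rpow_mul hP.le _ _).symm
      have h2 : (1:ℝ) / (α - 1) * α = (1:ℝ) / (α - 1) + 1 := by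
        field_simp
        ring
      rw [hlam, h1, h2, Real.rpow_add hP, Real.rpow_one]
    -- compute |u x|
    have habsu : |u x| = lam * |x| ^ (β + (n:ℝ)) := by
      rw [hu]
      by_cases hx : x < 0
      · simp only [if_pos hx, hpn]
        rw [abs_mul, abs_mul, abs_pow, abs_neg, abs_one, one_pow, one_mul,
          abs_of_pos hlampos, abs_of_nonneg (Real.rpow_nonneg (by linarith : (0:ℝ) ≤ -x) _),
          abs_of_neg hx]
      · simp only [if_neg hx, hpn]
        push_neg at hx
        rw [abs_neg, abs_mul, abs_of_pos hlampos,
          abs_of_nonneg (Real.rpow_nonneg hx _), abs_of_nonneg hx]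
    rw [habsu, Real.mul_rpow hlampos.le (Real.rpow_nonneg (abs_nonneg x) _),
      ← Real.rpow_mul (abs_nonneg x), hpα, hexpn, hA, hodd.neg_one_pow]
    by_cases hx : x < 0
    · simp only [if_pos hx]
      rw [abs_of_neg hx, ← hlamA]; ring
    · simp only [if_neg hx]
      rw [abs_of_nonneg (not_lt.mp hx), ← hlamA]; ring
end
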